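/- Let k be a field. Then there exist an integer n > 1 and a division ring D which is finite-dimensional as a vector space over its center, such that the matrix ring Mₙ(D) is a minimal ring extension of k (i.e., there is an injective ring homomorphism from k into Mₙ(D) whose image is a maximal subring of Mₙ(D)), if and only if k has a proper subfield F such that k is finite-dimensional as an F-vector space. -/

import Mathlib

/-- `R` is a maximal subring of `S`. -/
def IsMaximalSubring {S : Type*} [Ring S] (R : Subring S) : Prop :=
  R ≠ ⊤ ∧ ∀ T : Subring S, R ≤ T → T = R ∨ T = ⊤

/-- `Mₙ(D)` is a minimal ring extension of the field `k`, with `n > 1` and `D` a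
division ring finite-dimensional over its center: there is an injective ring
homomorphism `k → Mₙ(D)` whose image is a maximal subring. -/
def IsCentrallyFiniteMatrixMinimalExt (k : Type) [Field k] (n : ℕ) (D : Type)
    [DivisionRing D] : Prop :=
  1 < n ∧
  FiniteDimensional (Subring.center D) D ∧
  ∃ f : k →+* Matrix (Fin n) (Fin n) D,
    Function.Injective f ∧ IsMaximalSubring f.range

lemma finite_of_ringEquiv_smul {R S M : Type*} [Semiring R] [Semiring S] [AddCommMonoid M]
    [Module R M] [Module S M] (e : R ≃+* S) (h : ∀ (r : R) (m : M), e r • m = r • m)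
    (hS : Module.Finite S M) : Module.Finite R M := by
  obtain ⟨s, hs⟩ := Module.finite_def.mp hS
  refine Module.finite_def.mpr ⟨s, eq_top_iff.2 fun x hxx => ?_⟩
  clear hxx
  have hx : x ∈ Submodule.span S (s : Set M) := hs ▸ Submodule.mem_top
  induction hx using Submodule.span_induction with
  | mem y hy => exact Submodule.subset_span hy
  | zero => exact zero_mem _
  | add y z _ _ hy hz => exact add_mem hy hz
  | smul c y _ hy =>
    have : c • y = e.symm c • y := by rw [← h (e.symm c) y, e.apply_symm_apply]
    exact this ▸ Submodule.smul_mem _ _ hy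

set_option maxHeartbeats 1600000 in
set_option synthInstance.maxHeartbeats 400000 in
theorem fwd {k : Type} [Field k] {n : ℕ} {D : Type} [DivisionRing D]
    (h : IsCentrallyFiniteMatrixMinimalExt k n D) :
    ∃ F : Subfield k, F ≠ ⊤ ∧ FiniteDimensional F k := by
  obtain ⟨hn, hfin, f, hinj, hmax⟩ := h
  set R := Matrix (Fin n) (Fin n) D with hR
  let i0 : Fin n := ⟨0, by omega⟩
  let i1 : Fin n := ⟨1, by omega⟩
  have h01 : i0 ≠ i1 := by simp [i0, i1, Fin.ext_iff]
  let E01 : R := Matrix.single i0 i1 1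
  let E10 : R := Matrix.single i1 i0 1
  have hcomm_ne : E01 * E10 ≠ E10 * E01 := by
    have h1 : E01 * E10 = Matrix.single i0 i0 (1 * 1 : D) :=
      by classical exact Matrix.single_mul_single_same (c := (1 : D)) i0 i1 i0 (1 : D)
    have h2 : E10 * E01 = Matrix.single i1 i1 (1 * 1 : D) :=
      by classical exact Matrix.single_mul_single_same (c := (1 : D)) i1 i0 i1 (1 : D)
    rw [h1, h2]
    intro hEq
    have h3 : Matrix.single i0 i0 (1 * 1 : D) i0 i0
        = Matrix.single i1 i1 (1 * 1 : D) i0 i0 := congrFun (congrFun hEq i0) i0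
    rw [Matrix.single_apply_same,
      Matrix.single_apply_of_ne _ _ _ _ _ (by tauto)] at h3
    simp at h3
  -- Step B : center ≤ range
  have hZle : Subring.center R ≤ f.range := by
    set T := Subring.closure ((f.range : Set R) ∪ (Subring.center R : Set R)) with hT
    have hTcomm : ∀ x ∈ T, ∀ y ∈ T, Commute x y := by
      intro x hx y hy
      refine Subring.closure_induction₂ (p := fun x y _ _ => Commute x y)
        ?_ (fun x _ => Commute.zero_left x) (fun x _ => Commute.zero_right x)
        (fun x _ => Commute.one_left x) (fun x _ => Commute.one_right x)
        (fun _ _ _ _ h => h.neg_left) (fun _ _ _ _ h => h.neg_right)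
        (fun _ _ _ _ _ _ h₁ h₂ => h₁.add_left h₂) (fun _ _ _ _ _ _ h₁ h₂ => h₁.add_right h₂)
        (fun _ _ _ _ _ _ h₁ h₂ => h₁.mul_left h₂) (fun _ _ _ _ _ _ h₁ h₂ => h₁.mul_right h₂)
        hx hy
      rintro x y (⟨a, rfl⟩ | hx) (⟨b, rfl⟩ | hy)
      · show f a * f b = f b * f a
        rw [← map_mul, ← map_mul, mul_comm]
      · exact Subring.mem_center_iff.mp hy (f a)
      · exact (Subring.mem_center_iff.mp hx (f b)).symm
      · exact (Subring.mem_center_iff.mp hx y).symm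
    have hTne : T ≠ ⊤ := by
      intro htop
      exact hcomm_ne (hTcomm E01 (htop ▸ Subring.mem_top _) E10 (htop ▸ Subring.mem_top _))
    have hTR : T = f.range :=
      (hmax.2 T (fun x hx => Subring.subset_closure (Or.inl hx))).resolve_right hTne
    exact fun z hz => hTR ▸ Subring.subset_closure (Or.inr hz)
  -- central matrices are scalar with central entries
  have hdcent : ∀ M ∈ Subring.center R, ∀ d : D, M = Matrix.scalar (Fin n) d →
      ∀ g : D, g * d = d * g := by
    intro M hM d hMd g
    have := Subring.mem_center_iff.mp hM (Matrix.scalar (Fin n) g)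
    rw [hMd, ← map_mul, ← map_mul] at this
    have := congrFun (congrFun this i0) i0
    simpa [Matrix.scalar_apply] using this
  have hscal : ∀ M ∈ Subring.center R, ∃ d : D, M = Matrix.scalar (Fin n) d := by
    intro M hM
    obtain ⟨d, hd⟩ := Matrix.mem_range_scalar_of_commute_single
      (M := M) (fun i j _ => (Subring.mem_center_iff.mp hM _))
    exact ⟨d, hd.symm⟩
  -- the subfield F
  have hinvc : ∀ a : k, f a ∈ Subring.center R → f a⁻¹ ∈ Subring.center R := by
    intro a ha
    rcases eq_or_ne a 0 with rfl | h0
    · simpa using Subring.zero_mem (Subring.center R)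
    have hu : f a * f a⁻¹ = 1 := by rw [← map_mul, mul_inv_cancel₀ h0, map_one]
    have hu' : f a⁻¹ * f a = 1 := by rw [← map_mul, inv_mul_cancel₀ h0, map_one]
    refine Subring.mem_center_iff.mpr fun g => ?_
    calc g * f a⁻¹ = f a⁻¹ * (f a * g) * f a⁻¹ := by
          rw [← mul_assoc, hu', one_mul]
      _ = f a⁻¹ * (g * f a) * f a⁻¹ := by rw [Subring.mem_center_iff.mp ha g]
      _ = f a⁻¹ * g * (f a * f a⁻¹) := by simp [mul_assoc]
      _ = f a⁻¹ * g := by rw [hu, mul_one]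
  let F : Subfield k :=
  { carrier := {a : k | f a ∈ Subring.center R}
    zero_mem' := by simpa using Subring.zero_mem (Subring.center R)
    one_mem' := by simpa using Subring.one_mem (Subring.center R)
    add_mem' := fun {a b} ha hb => by simpa [map_add] using Subring.add_mem _ (show f a ∈ Subring.center R from ha) (show f b ∈ Subring.center R from hb)
    neg_mem' := fun {a} ha => by simpa [map_neg] using Subring.neg_mem _ (show f a ∈ Subring.center R from ha)
    mul_mem' := fun {a b} ha hb => by simpa [map_mul] using Subring.mul_mem _ (show f a ∈ Subring.center R from ha) (show f b ∈ Subring.center R from hb)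
    inv_mem' := fun a ha => hinvc a ha }
  have hmemF : ∀ a : k, a ∈ F ↔ f a ∈ Subring.center R := fun a => Iff.rfl
  -- properness
  have hFne : F ≠ ⊤ := by
    intro hF
    have hrangeC : ∀ a : k, f a ∈ Subring.center R := fun a =>
      (hmemF a).mp (hF ▸ Subfield.mem_top a)
    let Ttri : Subring R :=
    { carrier := {M : R | ∀ i j : Fin n, (j : ℕ) < (i : ℕ) → M i j = 0}
      zero_mem' := fun i j _ => rfl
      one_mem' := fun i j hij => Matrix.one_apply_ne (by
        intro hEq; rw [hEq] at hij; omega)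
      add_mem' := fun {M N} hM hN i j hij => by
        rw [Matrix.add_apply, hM i j hij, hN i j hij, add_zero]
      neg_mem' := fun {M} hM i j hij => by
        rw [Matrix.neg_apply, hM i j hij, neg_zero]
      mul_mem' := fun {M N} hM hN i j hij => by
        rw [Matrix.mul_apply]
        refine Finset.sum_eq_zero fun l _ => ?_
        rcases lt_or_ge (j : ℕ) (l : ℕ) with hl | hl
        · rw [hN l j hl, mul_zero]
        · rw [hM i l (by omega), zero_mul] }
    have hrle : f.range ≤ Ttri := by
      rintro x ⟨a, rfl⟩
      obtain ⟨d, hd⟩ := hscal _ (hrangeC a)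
      intro i j hij
      rw [hd, Matrix.scalar_apply]
      exact Matrix.diagonal_apply_ne _ (by intro hEq; rw [hEq] at hij; omega)
    have hE01 : E01 ∈ Ttri := by
      intro i j hij
      refine Matrix.single_apply_of_ne _ _ _ _ _ ?_
      rintro ⟨rfl, rfl⟩
      simp [i0, i1] at hij
    have hE10 : E10 ∉ Ttri := by
      intro hmem
      have h4 : Matrix.single i1 i0 (1 : D) i1 i0 = 0 := hmem i1 i0 (by simp [i0, i1])
      rw [Matrix.single_apply_same] at h4
      exact one_ne_zero h4
    rcases hmax.2 Ttri hrle with hc | hc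
    · have : E01 ∈ f.range := hc ▸ hE01
      obtain ⟨a, ha⟩ := this
      have : E01 ∈ Subring.center R := ha ▸ hrangeC a
      exact hcomm_ne (Subring.mem_center_iff.mp this E10).symm
    · exact hE10 (hc ▸ Subring.mem_top _)
  -- finiteness
  haveI : FiniteDimensional (Subring.center D) D := hfin
  haveI hMfin : Module.Finite (Subring.center D) R := Module.Finite.matrix
  -- ring equiv center D ≃ center R
  let g₁ : Subring.center D →+* Subring.center R :=
  { toFun := fun d => ⟨Matrix.scalar (Fin n) (d : D), Subring.mem_center_iff.mpr fun M =>
      ((Matrix.scalar_commute (d : D)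
        (fun g => (Subring.mem_center_iff.mp d.2 g).symm) M).symm).eq⟩
    map_one' := Subtype.ext (map_one (Matrix.scalar (Fin n)))
    map_mul' := fun a b => Subtype.ext (map_mul (Matrix.scalar (Fin n)) _ _)
    map_zero' := Subtype.ext (map_zero (Matrix.scalar (Fin n)))
    map_add' := fun a b => Subtype.ext (map_add (Matrix.scalar (Fin n)) _ _) }
  have hg₁ : Function.Bijective g₁ := by
    constructor
    · intro a b hab
      haveI : Nonempty (Fin n) := ⟨i0⟩
      have h5 : Matrix.scalar (Fin n) (a : D) = Matrix.scalar (Fin n) (b : D) :=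
        congrArg Subtype.val hab
      exact Subtype.ext (Matrix.scalar_inj.mp h5)
    · rintro ⟨z, hz⟩
      obtain ⟨d, hd⟩ := hscal z hz
      exact ⟨⟨d, Subring.mem_center_iff.mpr (hdcent z hz d hd)⟩, Subtype.ext hd.symm⟩
  let e₁ : Subring.center D ≃+* Subring.center R := RingEquiv.ofBijective g₁ hg₁
  haveI hZfin : Module.Finite (Subring.center R) R := by
    refine finite_of_ringEquiv_smul e₁.symm (fun z M => ?_) hMfin
    obtain ⟨d, rfl⟩ := e₁.surjective z
    rw [RingEquiv.symm_apply_apply]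
    have h₁ : e₁ d • M = (Matrix.scalar (Fin n) (d : D)) * M := by
      rw [Subring.smul_def, smul_eq_mul]; rfl
    have h₂ : ∀ i j, (d • M) i j = (d : D) * M i j := fun i j => by
      rw [Matrix.smul_apply, Subring.smul_def, smul_eq_mul]
    ext i j
    rw [h₂, h₁, Matrix.scalar_apply, Matrix.diagonal_mul]
  -- F ≃ center R
  let g₂ : F →+* Subring.center R :=
  { toFun := fun a => ⟨f a, a.2⟩
    map_one' := Subtype.ext (map_one f)
    map_mul' := fun a b => Subtype.ext (map_mul f _ _)
    map_zero' := Subtype.ext (map_zero f)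
    map_add' := fun a b => Subtype.ext (map_add f _ _) }
  have hg₂ : Function.Bijective g₂ := by
    constructor
    · intro a b hab
      exact Subtype.ext (hinj (congrArg Subtype.val hab))
    · rintro ⟨z, hz⟩
      obtain ⟨a, ha⟩ := hZle hz
      exact ⟨⟨a, (hmemF a).mpr (ha ▸ hz)⟩, Subtype.ext ha⟩
  let σ : F ≃+* Subring.center R := RingEquiv.ofBijective g₂ hg₂
  letI : Module F R := Module.compHom R (f.comp F.subtype)
  haveI hFR : Module.Finite F R := by
    refine finite_of_ringEquiv_smul σ (fun a M => ?_) hZfin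
    rw [Subring.smul_def, smul_eq_mul]
    rfl
  let lin : k →ₗ[F] R :=
  { toFun := f
    map_add' := map_add f
    map_smul' := fun c x => by
      show f (c • x) = c • f x
      show f ((c : k) * x) = f (c : k) * f x
      rw [map_mul] }
  exact ⟨F, hFne, FiniteDimensional.of_injective lin hinj⟩

lemma isMaximalSubring_map {R S : Type*} [Ring R] [Ring S] (e : R ≃+* S) {A : Subring R}
    (h : IsMaximalSubring A) : IsMaximalSubring (A.map (e : R →+* S)) := by
  constructor
  · intro htop
    apply h.1
    rw [eq_top_iff]
    intro x _
    have : e x ∈ A.map (e : R →+* S) := htop ▸ Subring.mem_top _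
    obtain ⟨a, ha, hax⟩ := this
    rwa [← e.injective hax]
  · intro T hT
    rcases h.2 (T.comap (e : R →+* S)) (fun a ha => hT ⟨a, ha, rfl⟩) with hc | hc
    · left
      ext x
      constructor
      · intro hx
        have : e.symm x ∈ T.comap (e : R →+* S) := by
          simpa [Subring.mem_comap] using (e.apply_symm_apply x ▸ hx)
        exact ⟨e.symm x, hc ▸ this, e.apply_symm_apply x⟩
      · intro hx; exact hT hx
    · right
      rw [eq_top_iff]
      intro x _
      have : e.symm x ∈ T.comap (e : R →+* S) := hc ▸ Subring.mem_top _
      simpa [Subring.mem_comap, e.apply_symm_apply] using this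

/-- A (commutative) field is finite-dimensional over its center. -/
lemma centrallyFinite_of_field (L : Type*) [Field L] :
    FiniteDimensional (Subring.center L) L := by
  refine Module.Finite.of_surjective (LinearMap.toSpanSingleton (Subring.center L) L 1) ?_
  intro x
  refine ⟨⟨x, Subring.mem_center_iff.mpr fun g => mul_comm g x⟩, ?_⟩
  show (⟨x, _⟩ : Subring.center L) • (1 : L) = x
  show x * 1 = x
  rw [mul_one]

section Density

variable {k : Type} [Field k] (F : Subfield k)

/-- Jacobson density for subrings of `End F k` containing all left multiplications,
whose commutant in `k` is exactly `F`. -/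
lemma density (T : Subring (Module.End F k))
    (hL : ∀ a : k, (Algebra.lmul F k a : Module.End F k) ∈ T)
    (hE : ∀ c : k, (∀ t ∈ T, ∀ x : k, t (c * x) = c * t x) → c ∈ F) :
    ∀ (r : ℕ) (s : Fin r → k), LinearIndependent F s → ∀ y : Fin r → k,
      ∃ t ∈ T, ∀ i, t (s i) = y i := by
  intro r
  induction r with
  | zero => exact fun s _ y => ⟨0, T.toSubsemiring.zero_mem, fun i => i.elim0⟩
  | succ r IH =>
    intro s hs y
    set s' : Fin r → k := s ∘ Fin.castSucc with hs'def
    have hs' : LinearIndependent F s' := hs.comp _ (Fin.castSucc_injective r)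
    have hsnoc : s = Fin.snoc s' (s (Fin.last r)) := by
      funext i
      induction i using Fin.lastCases with
      | last => rw [Fin.snoc_last]
      | cast i => rw [Fin.snoc_castSucc]; rfl
    have hlast : s (Fin.last r) ∉ Submodule.span F (Set.range s') := by
      rw [hsnoc] at hs
      exact (linearIndependent_fin_snoc.mp hs).2
    have key : ∃ t ∈ T, (∀ i, t (s' i) = 0) ∧ t (s (Fin.last r)) ≠ 0 := by
      by_contra hcon
      push_neg at hcon
      -- well-definedness
      have wd : ∀ t ∈ T, ∀ u ∈ T, (∀ i, t (s' i) = u (s' i)) →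
          t (s (Fin.last r)) = u (s (Fin.last r)) := by
        intro t ht u hu hagree
        have hmem : t - u ∈ T := sub_mem ht hu
        have h0 : ∀ i, (t - u) (s' i) = 0 := fun i => by
          rw [LinearMap.sub_apply, hagree i, sub_self]
        have := hcon (t - u) hmem h0
        rw [LinearMap.sub_apply, sub_eq_zero] at this
        exact this
      choose tt httT htt using fun v : Fin r → k => IH s' hs' v
      set c : Fin r → k := fun j => tt (Pi.single j 1) (s (Fin.last r)) with hc
      have hid : ∀ t ∈ T, t (s (Fin.last r)) = ∑ j, t (s' j) * c j := by
        intro t ht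
        set u : Module.End F k :=
          ∑ j, (Algebra.lmul F k (t (s' j)) : Module.End F k) * tt (Pi.single j 1) with hu
        have huT : u ∈ T := Subring.sum_mem _ fun j _ =>
          Subring.mul_mem _ (hL _) (httT (Pi.single j 1))
        have hagree : ∀ i, t (s' i) = u (s' i) := by
          intro i
          rw [hu, LinearMap.sum_apply]
          rw [Finset.sum_eq_single i]
          · rw [Module.End.mul_apply, htt (Pi.single i 1) i, Pi.single_eq_same]
            show t (s' i) = t (s' i) * 1
            rw [mul_one]
          · intro j _ hji
            rw [Module.End.mul_apply, htt (Pi.single j 1) i, Pi.single_eq_of_ne (Ne.symm hji)]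
            show _ * (0 : k) = 0
            rw [mul_zero]
          · intro hi; exact absurd (Finset.mem_univ i) hi
        have := wd t ht u huT hagree
        rw [this, hu, LinearMap.sum_apply]
        refine Finset.sum_congr rfl fun j _ => ?_
        rw [Module.End.mul_apply]
        rfl
      have hcF : ∀ j, c j ∈ F := by
        intro j
        refine hE (c j) fun t ht x => ?_
        have h₁T : t * (Algebra.lmul F k x : Module.End F k) * tt (Pi.single j 1) ∈ T :=
          Subring.mul_mem _ (Subring.mul_mem _ ht (hL x)) (httT _)
        have h₂T : (Algebra.lmul F k (t x) : Module.End F k) * tt (Pi.single j 1) ∈ T :=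
          Subring.mul_mem _ (hL _) (httT _)
        have hagree : ∀ i,
            (t * (Algebra.lmul F k x : Module.End F k) * tt (Pi.single j 1)) (s' i)
            = ((Algebra.lmul F k (t x) : Module.End F k) * tt (Pi.single j 1)) (s' i) := by
          intro i
          rw [Module.End.mul_apply, Module.End.mul_apply, Module.End.mul_apply,
            htt (Pi.single j 1) i]
          rcases eq_or_ne i j with rfl | hij
          · rw [Pi.single_eq_same]
            show t ((Algebra.lmul F k x) 1) = t x * 1
            rw [mul_one]
            show t (x * 1) = t x
            rw [mul_one]
          · rw [Pi.single_eq_of_ne hij]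
            show t ((Algebra.lmul F k x) 0) = t x * 0
            rw [mul_zero, map_zero, map_zero]
        have := wd _ h₁T _ h₂T hagree
        rw [Module.End.mul_apply, Module.End.mul_apply, Module.End.mul_apply] at this
        -- this : t (lmul x (c j)) = t x * c j  (as tt _ (s last) = c j)
        have h3 : t (x * c j) = t x * c j := this
        rw [mul_comm (c j) x, h3, mul_comm (t x) (c j)]
      have hrep : s (Fin.last r) = ∑ j, (⟨c j, hcF j⟩ : F) • s' j := by
        have h1 := hid 1 T.toSubsemiring.one_mem
        rw [Module.End.one_apply] at h1
        rw [h1]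
        refine Finset.sum_congr rfl fun j _ => ?_
        rw [Module.End.one_apply]
        show s' j * c j = (⟨c j, hcF j⟩ : F) • s' j
        show s' j * c j = c j * s' j
        rw [mul_comm]
      refine hlast ?_
      rw [hrep]
      exact Submodule.sum_mem _ fun j _ =>
        Submodule.smul_mem _ _ (Submodule.subset_span (Set.mem_range_self j))
    obtain ⟨t₀, ht₀T, ht₀z, ht₀ne⟩ := key
    obtain ⟨u, huT, hu⟩ := IH s' hs' fun i => y i.castSucc
    refine ⟨u + (Algebra.lmul F k
        ((y (Fin.last r) - u (s (Fin.last r))) * (t₀ (s (Fin.last r)))⁻¹) :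
        Module.End F k) * t₀, ?_, ?_⟩
    · exact Subring.add_mem _ huT (Subring.mul_mem _ (hL _) ht₀T)
    · intro i
      induction i using Fin.lastCases with
      | last =>
        rw [LinearMap.add_apply, Module.End.mul_apply]
        show u (s (Fin.last r)) +
          ((y (Fin.last r) - u (s (Fin.last r))) * (t₀ (s (Fin.last r)))⁻¹)
            * t₀ (s (Fin.last r)) = y (Fin.last r)
        rw [inv_mul_cancel_right₀ ht₀ne, add_sub_cancel]
      | cast i =>
        rw [LinearMap.add_apply, Module.End.mul_apply]
        have hz : t₀ (s i.castSucc) = 0 := ht₀z i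
        rw [hz, map_zero, add_zero]
        exact hu i

end Density

section Backward

variable {k : Type} [Field k]

lemma mem_span_subfield {F E : Subfield k} (h : F ≤ E) {x : k} :
    x ∈ Submodule.span F (E : Set k) ↔ x ∈ E := by
  constructor
  · intro hx
    induction hx using Submodule.span_induction with
    | mem y hy => exact hy
    | zero => exact zero_mem E
    | add y z _ _ hy hz => exact add_mem hy hz
    | smul c y _ hy => exact mul_mem (h c.2) hy
  · exact fun hx => Submodule.subset_span hx

lemma finite_mono {F E : Subfield k} (h : F ≤ E) (hf : Module.Finite F k) :
    Module.Finite E k := by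
  obtain ⟨s, hs⟩ := Module.finite_def.mp hf
  refine Module.finite_def.mpr ⟨s, eq_top_iff.2 fun x hxx => ?_⟩
  clear hxx
  have hx : x ∈ Submodule.span F (s : Set k) := hs ▸ Submodule.mem_top
  induction hx using Submodule.span_induction with
  | mem y hy => exact Submodule.subset_span hy
  | zero => exact zero_mem _
  | add y z _ _ hy hz => exact add_mem hy hz
  | smul c y _ hy => exact Submodule.smul_mem _ (⟨c.1, h c.2⟩ : E) hy

set_option maxHeartbeats 1000000 in
set_option synthInstance.maxHeartbeats 400000 in
lemma lmul_range_max (F : Subfield k) [FiniteDimensional F k]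
    (hrank : 1 < Module.finrank F k)
    (hmin : ∀ E : Subfield k, F ≤ E → E = F ∨ E = ⊤) :
    IsMaximalSubring ((Algebra.lmul F k).toRingHom.range) := by
  constructor
  · intro htop
    set b := Module.finBasis F k with hb
    let i0 : Fin (Module.finrank F k) := ⟨0, by omega⟩
    let i1 : Fin (Module.finrank F k) := ⟨1, by omega⟩
    have h01 : i0 ≠ i1 := by simp [i0, i1, Fin.ext_iff]
    let φ : Module.End F k := LinearMap.smulRight (b.coord i0) (b i0)
    have hφ : φ ∈ (Algebra.lmul F k).toRingHom.range := htop ▸ Subring.mem_top _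
    obtain ⟨a, ha⟩ := hφ
    have h1 : a * b i1 = 0 := by
      have h2 : (Algebra.lmul F k a) (b i1) = φ (b i1) := congrArg (fun t => t (b i1)) ha
      have h3 : φ (b i1) = (b.coord i0 (b i1)) • b i0 := rfl
      rw [Module.Basis.coord_apply, Module.Basis.repr_self, Finsupp.single_apply, if_neg (by
        simpa using h01.symm)] at h3
      rw [h3, zero_smul] at h2
      exact h2
    have ha0 : a = 0 := by
      rcases mul_eq_zero.mp h1 with h | h
      · exact h
      · exact absurd h (b.ne_zero i1)
    have h4 : (Algebra.lmul F k a) (b i0) = φ (b i0) := congrArg (fun t => t (b i0)) ha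
    have h5 : φ (b i0) = (b.coord i0 (b i0)) • b i0 := rfl
    rw [Module.Basis.coord_apply, Module.Basis.repr_self, Finsupp.single_apply, if_pos rfl, one_smul] at h5
    have h6 : a * b i0 = b i0 := by
      have h7 := h4
      rw [h5] at h7
      exact h7
    rw [ha0, zero_mul] at h6
    exact b.ne_zero i0 h6.symm
  · intro T hT
    let E' : Subfield k :=
    { carrier := {c : k | ∀ t ∈ T, ∀ x : k, t (c * x) = c * t x}
      zero_mem' := fun t _ x => by rw [zero_mul, map_zero, zero_mul]
      one_mem' := fun t _ x => by rw [one_mul, one_mul]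
      add_mem' := fun {a b} ha hb t ht x => by
        rw [add_mul, map_add, ha t ht x, hb t ht x, add_mul]
      neg_mem' := fun {a} ha t ht x => by
        rw [neg_mul, map_neg, ha t ht x, neg_mul]
      mul_mem' := fun {a b} ha hb t ht x => by
        rw [mul_assoc, ha t ht (b * x), hb t ht x, mul_assoc]
      inv_mem' := fun a ha => by
        rcases eq_or_ne a 0 with rfl | h0
        · intro t ht x; rw [inv_zero, zero_mul, map_zero, zero_mul]
        · intro t ht x
          have h1 := ha t ht (a⁻¹ * x)
          rw [← mul_assoc, mul_inv_cancel₀ h0, one_mul] at h1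
          calc t (a⁻¹ * x) = a⁻¹ * (a * t (a⁻¹ * x)) := by
                rw [← mul_assoc, inv_mul_cancel₀ h0, one_mul]
            _ = a⁻¹ * t x := by rw [← h1] }
    have hFE : F ≤ E' := by
      intro c hc t ht x
      have h1 : c * x = (⟨c, hc⟩ : F) • x := rfl
      rw [h1, map_smul]
      rfl
    rcases hmin E' hFE with hc | hc
    · -- commutant is F : density gives T = ⊤
      right
      have hL : ∀ a : k, (Algebra.lmul F k a : Module.End F k) ∈ T := fun a => hT ⟨a, rfl⟩
      have hE : ∀ c : k, (∀ t ∈ T, ∀ x : k, t (c * x) = c * t x) → c ∈ F :=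
        fun c hcc => hc ▸ (hcc : c ∈ E')
      rw [eq_top_iff]
      intro φ _
      obtain ⟨t, htT, hteq⟩ := density F T hL hE (Module.finrank F k) (Module.finBasis F k)
        (Module.finBasis F k).linearIndependent (fun i => φ (Module.finBasis F k i))
      have : t = φ := (Module.finBasis F k).ext hteq
      exact this ▸ htT
    · -- commutant is everything : T is just left multiplications
      left
      refine le_antisymm ?_ hT
      intro t ht
      have hcomm : ∀ a x : k, t (a * x) = a * t x := fun a x =>
        (hc ▸ Subfield.mem_top a : a ∈ E') t ht x
      refine ⟨t 1, ?_⟩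
      apply LinearMap.ext
      intro x
      show t 1 * x = t x
      rw [mul_comm]
      calc x * t 1 = t (x * 1) := (hcomm x 1).symm
        _ = t x := by rw [mul_one]

end Backward

set_option maxHeartbeats 1000000 in
set_option synthInstance.maxHeartbeats 400000 in
theorem bwd {k : Type} [Field k] (h : ∃ F : Subfield k, F ≠ ⊤ ∧ FiniteDimensional F k) :
    ∃ (n : ℕ) (D : Type) (inst : DivisionRing D),
      @IsCentrallyFiniteMatrixMinimalExt k _ n D inst := by
  obtain ⟨F₀, hne₀, hfd₀⟩ := h
  haveI : FiniteDimensional F₀ k := hfd₀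
  let sub : ∀ E : Subfield k, F₀ ≤ E → Submodule F₀ k := fun E hE =>
    { carrier := E
      add_mem' := fun ha hb => add_mem ha hb
      zero_mem' := zero_mem E
      smul_mem' := fun c x hx => mul_mem (hE c.2) hx }
  let S : Set ℕ := {r | ∃ E : Subfield k, ∃ hE : F₀ ≤ E, E ≠ ⊤ ∧
    Module.finrank F₀ (sub E hE) = r}
  have hSne : S.Nonempty := ⟨_, F₀, le_refl _, hne₀, rfl⟩
  have hSbdd : BddAbove S := ⟨Module.finrank F₀ k, by
    rintro r ⟨E, hE, _, rfl⟩; exact Submodule.finrank_le _⟩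
  obtain ⟨E, hE, hEne, hEr⟩ := Nat.sSup_mem hSne hSbdd
  haveI hfdE : FiniteDimensional E k := finite_mono hE hfd₀
  have hmin : ∀ E' : Subfield k, E ≤ E' → E' = E ∨ E' = ⊤ := by
    intro E' hEE'
    by_contra hcon
    push_neg at hcon
    have hE' : F₀ ≤ E' := le_trans hE hEE'
    have hlt : sub E hE < sub E' hE' := by
      refine lt_of_le_of_ne (fun x hx => hEE' hx) ?_
      intro heq
      apply hcon.1
      apply le_antisymm
      · intro x hx
        have : x ∈ sub E' hE' := hx
        rw [← heq] at this
        exact this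
      · exact hEE'
    have hltr := Submodule.finrank_lt_finrank_of_lt hlt
    have hmem : Module.finrank F₀ (sub E' hE') ∈ S := ⟨E', hE', hcon.2, rfl⟩
    have hle := le_csSup hSbdd hmem
    omega
  have hErk : 1 < Module.finrank E k := by
    have h0 : 0 < Module.finrank E k := Module.finrank_pos
    have hne1 : Module.finrank E k ≠ 1 := by
      intro h1
      apply hEne
      rw [eq_top_iff]
      intro x _
      obtain ⟨c, hcx⟩ := (finrank_eq_one_iff_of_nonzero' (1 : k) one_ne_zero).mp h1 x
      have : (c : k) = x := by
        rw [← hcx]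
        show (c : k) = (c : k) * 1
        rw [mul_one]
      exact this ▸ c.2
    omega
  let e := algEquivMatrix (Module.finBasis E k)
  let l : k →+* Module.End E k := (Algebra.lmul E k).toRingHom
  let f : k →+* Matrix (Fin (Module.finrank E k)) (Fin (Module.finrank E k)) E :=
    (e.toRingEquiv : Module.End E k ≃+* _).toRingHom.comp l
  have hinj : Function.Injective f := by
    intro a b hab
    have h1 : l a = l b := e.toRingEquiv.injective hab
    have h2 : a * 1 = b * 1 := congrArg (fun t : Module.End E k => t 1) h1
    rwa [mul_one, mul_one] at h2
  have hrange : f.range = Subring.map (e.toRingEquiv : Module.End E k →+* _) l.range := by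
    ext x
    constructor
    · rintro ⟨a, rfl⟩
      exact ⟨l a, ⟨a, rfl⟩, rfl⟩
    · rintro ⟨w, ⟨a, rfl⟩, rfl⟩
      exact ⟨a, rfl⟩
  have hmaxl : IsMaximalSubring l.range := lmul_range_max E hErk hmin
  refine ⟨Module.finrank E k, E, inferInstance, hErk, centrallyFinite_of_field E, f, hinj, ?_⟩
  rw [hrange]
  exact isMaximalSubring_map e.toRingEquiv hmaxl


/-- A field `k` has a minimal ring extension of the form `Mₙ(D)`
with `n > 1` and `D` a centrally finite division ring if and only if `k` has a proper
subfield `F` over which `k` is finite-dimensional. -/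
theorem stmt19 (k : Type) [Field k] :
    (∃ (n : ℕ) (D : Type) (inst : DivisionRing D),
      @IsCentrallyFiniteMatrixMinimalExt k _ n D inst) ↔
    (∃ F : Subfield k, F ≠ ⊤ ∧ FiniteDimensional F k) := by
  constructor
  · rintro ⟨n, D, inst, hext⟩
    exact @fwd k _ n D inst hext
  · exact bwd
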